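/- Let C, S : ℕ → ℝ (indexed by k ≥ 1) with C_l ≥ 0 for all l, suppose C is summable, and suppose there exist ν, ϰ > 0 such that S_k·k^ν → 1 and (Σ_{l≥k} C_l)·k^ϰ → 1 as k → ∞. Set ζ = ϰ/ν. Then (Σ_{l≥k} C_l·S_l)·k^{ϰ+ν} → ζ/(ζ + 1) as k → ∞; that is, Σ_{l≥k} C_l S_l = (ζ/(ζ+1))·k^{−ϰ−ν}·(1 + o(1)). -/

import Mathlib

open Filter Topology

private lemma telescope_hasSum (b : ℕ → ℝ) (k : ℕ)
    (_h0 : ∀ n, 0 ≤ b n) (hmono : ∀ n, k ≤ n → b (n + 1) ≤ b n)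
    (hlim : Tendsto b atTop (𝓝 0)) :
    HasSum (fun n => b (k + n) - b (k + n + 1)) (b k) := by
  have hnn : ∀ n, 0 ≤ b (k + n) - b (k + n + 1) := fun n =>
    sub_nonneg.2 (hmono _ (Nat.le_add_right k n))
  have hps : ∀ N, ∑ n ∈ Finset.range N, (b (k + n) - b (k + n + 1)) = b k - b (k + N) := by
    intro N
    simpa [Nat.add_assoc] using Finset.sum_range_sub' (fun n => b (k + n)) N
  have h2 : Tendsto (fun N => b k - b (k + N)) atTop (𝓝 (b k)) := by
    have h3 : Tendsto (fun N : ℕ => b (k + N)) atTop (𝓝 0) := by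
      have := hlim.comp (tendsto_add_atTop_nat k)
      simpa [Function.comp_def, Nat.add_comm] using this
    simpa using tendsto_const_nhds.sub h3
  exact (hasSum_iff_tendsto_nat_of_nonneg hnn _).2 (h2.congr fun N => (hps N).symm)

private lemma rpow_tail_lim {p : ℝ} (_hp : 0 < p) :
    Tendsto (fun m : ℕ => ((m : ℝ) ^ (-p) - ((m : ℝ) + 1) ^ (-p)) * (m : ℝ) ^ (p + 1))
      atTop (𝓝 p) := by
  have hd : HasDerivAt (fun x : ℝ => x ^ (-p)) (-p * (1:ℝ) ^ (-p - 1)) 1 :=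
    Real.hasDerivAt_rpow_const (Or.inl one_ne_zero)
  rw [hasDerivAt_iff_tendsto_slope] at hd
  have hz : Tendsto (fun m : ℕ => 1 + 1 / (m : ℝ)) atTop (𝓝[≠] (1:ℝ)) := by
    rw [tendsto_nhdsWithin_iff]
    constructor
    · simpa using tendsto_const_nhds.add (tendsto_one_div_atTop_nhds_zero_nat (𝕜 := ℝ))
    · filter_upwards [eventually_ge_atTop 1] with m hm
      have hm0 : (0:ℝ) < (m:ℝ) := by exact_mod_cast hm
      have : (0:ℝ) < 1 / (m:ℝ) := by positivity
      simp only [Set.mem_compl_iff, Set.mem_singleton_iff]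
      intro h
      nlinarith [h]
  have hcomp := hd.comp hz
  have hneg : Tendsto (fun m : ℕ =>
      -(slope (fun x : ℝ => x ^ (-p)) 1 (1 + 1/(m:ℝ)))) atTop (𝓝 p) := by
    have := hcomp.neg
    simp only [Real.one_rpow, mul_one, neg_neg] at this
    exact this
  refine hneg.congr' ?_
  filter_upwards [eventually_ge_atTop 1] with m hm
  have hm0 : (0:ℝ) < (m:ℝ) := by exact_mod_cast hm
  have hy : (0:ℝ) ≤ 1 + 1/(m:ℝ) := by positivity
  rw [slope_def_field]
  have h1 : (m:ℝ) ^ (-p) * (m:ℝ) ^ (p+1) = (m:ℝ) := by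
    rw [← Real.rpow_add hm0]
    simp
  have h2 : ((m:ℝ)+1) ^ (-p) = (m:ℝ) ^ (-p) * (1 + 1/(m:ℝ)) ^ (-p) := by
    rw [← Real.mul_rpow hm0.le hy]
    congr 1
    field_simp
  have h3 : ((m:ℝ)+1) ^ (-p) * (m:ℝ) ^ (p+1) = (1 + 1/(m:ℝ)) ^ (-p) * (m:ℝ) := by
    rw [h2, mul_comm ((m:ℝ)^(-p)) _, mul_assoc, h1]
  rw [show (1:ℝ) + 1/(m:ℝ) - 1 = 1/(m:ℝ) from by ring, Real.one_rpow,
    div_div_eq_mul_div, div_one]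
  linear_combination h3 - h1

private noncomputable def FF (C : ℕ → ℝ) (k : ℕ) : ℝ := ∑' l, C (k + l)

private noncomputable def pw (ν : ℝ) (m : ℕ) : ℝ := (m : ℝ) ^ (-ν)

private lemma pw_nonneg (ν : ℝ) (m : ℕ) : 0 ≤ pw ν m :=
  Real.rpow_nonneg (Nat.cast_nonneg m) _

private lemma pw_anti {ν : ℝ} (hν : 0 < ν) {m : ℕ} (hm : 1 ≤ m) : pw ν (m+1) ≤ pw ν m := by
  have hm0 : (0:ℝ) < (m:ℝ) := by exact_mod_cast hm
  have hle : (m:ℝ) ≤ ((m+1 : ℕ):ℝ) := by push_cast; linarith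
  exact Real.rpow_le_rpow_of_nonpos hm0 hle (neg_nonpos.2 hν.le)

private lemma pw_lim {ν : ℝ} (hν : 0 < ν) : Tendsto (pw ν) atTop (𝓝 0) :=
  (tendsto_rpow_neg_atTop hν).comp tendsto_natCast_atTop_atTop

private lemma pw_mul {ν : ℝ} {m : ℕ} (hm : 1 ≤ m) : pw ν m * (m:ℝ) ^ ν = 1 := by
  have hm0 : (0:ℝ) < (m:ℝ) := by exact_mod_cast hm
  rw [pw, ← Real.rpow_add hm0]
  simp

private lemma tail_summable {C : ℕ → ℝ} (hCsum : Summable C) (k : ℕ) :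
    Summable fun n => C (k + n) :=
  ((summable_nat_add_iff k).2 hCsum).congr fun n => by rw [Nat.add_comm]

private lemma FF_nonneg {C : ℕ → ℝ} (hC : ∀ l, 0 ≤ C l) (k : ℕ) : 0 ≤ FF C k :=
  tsum_nonneg fun n => hC _

private lemma FF_succ {C : ℕ → ℝ} (hCsum : Summable C) (k : ℕ) :
    FF C k = C k + FF C (k+1) := by
  rw [FF, (tail_summable hCsum k).tsum_eq_zero_add]
  simp only [Nat.add_zero]
  congr 1
  exact tsum_congr fun n => by congr 1; omega

private lemma FF_anti {C : ℕ → ℝ} (hC : ∀ l, 0 ≤ C l) (hCsum : Summable C) (k : ℕ) :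
    FF C (k+1) ≤ FF C k := by
  rw [FF_succ hCsum k]
  linarith [hC k]

private lemma FF_le {C : ℕ → ℝ} (hC : ∀ l, 0 ≤ C l) (hCsum : Summable C) (k : ℕ) :
    FF C k ≤ FF C 0 :=
  antitone_nat_of_succ_le (FF_anti hC hCsum) (Nat.zero_le k)

private lemma keyIdentity {C : ℕ → ℝ} (hC : ∀ l, 0 ≤ C l) (hCsum : Summable C)
    {ν : ℝ} (hν : 0 < ν) {k : ℕ} (hk : 1 ≤ k) :
    Summable (fun n => C (k+n) * pw ν (k+n)) ∧
    Summable (fun n => (pw ν (k+n) - pw ν (k+n+1)) * FF C (k+n+1)) ∧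
    (∑' n, C (k+n) * pw ν (k+n)) + (∑' n, (pw ν (k+n) - pw ν (k+n+1)) * FF C (k+n+1))
      = FF C k * pw ν k := by
  set G : ℕ → ℝ := fun m => FF C m * pw ν m with hGdef
  have hG0 : ∀ m, 0 ≤ G m := fun m => mul_nonneg (FF_nonneg hC m) (pw_nonneg ν m)
  have hGmono : ∀ m, k ≤ m → G (m+1) ≤ G m := fun m hm =>
    mul_le_mul (FF_anti hC hCsum m) (pw_anti hν (hk.trans hm)) (pw_nonneg ν _)
      (FF_nonneg hC m)
  have hGlim : Tendsto G atTop (𝓝 0) := by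
    have hb : Tendsto (fun m => FF C 0 * pw ν m) atTop (𝓝 0) := by
      simpa using (pw_lim hν).const_mul (FF C 0)
    refine squeeze_zero hG0 (fun m => ?_) hb
    exact mul_le_mul_of_nonneg_right (FF_le hC hCsum m) (pw_nonneg ν m)
  have htele := telescope_hasSum G k hG0 hGmono hGlim
  have hterm : ∀ n, G (k+n) - G (k+n+1)
      = C (k+n) * pw ν (k+n) + (pw ν (k+n) - pw ν (k+n+1)) * FF C (k+n+1) := by
    intro n
    simp only [hGdef]
    rw [FF_succ hCsum (k+n)]
    ring
  have hnn1 : ∀ n, 0 ≤ C (k+n) * pw ν (k+n) := fun n =>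
    mul_nonneg (hC _) (pw_nonneg ν _)
  have hnn2 : ∀ n, 0 ≤ (pw ν (k+n) - pw ν (k+n+1)) * FF C (k+n+1) := fun n =>
    mul_nonneg (sub_nonneg.2 (pw_anti hν (le_trans hk (Nat.le_add_right k n))))
      (FF_nonneg hC _)
  have hpsum : ∀ N, ∑ n ∈ Finset.range N,
      (C (k+n) * pw ν (k+n) + (pw ν (k+n) - pw ν (k+n+1)) * FF C (k+n+1)) ≤ G k := by
    intro N
    have heq : ∑ n ∈ Finset.range N,
        (C (k+n) * pw ν (k+n) + (pw ν (k+n) - pw ν (k+n+1)) * FF C (k+n+1))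
        = G k - G (k+N) := by
      have hc : ∑ n ∈ Finset.range N,
          (C (k+n) * pw ν (k+n) + (pw ν (k+n) - pw ν (k+n+1)) * FF C (k+n+1))
          = ∑ n ∈ Finset.range N, (G (k+n) - G (k+n+1)) :=
        Finset.sum_congr rfl fun n _ => (hterm n).symm
      rw [hc]
      simpa [Nat.add_assoc] using Finset.sum_range_sub' (fun n => G (k + n)) N
    rw [heq]
    linarith [hG0 (k+N)]
  have hs1 : Summable (fun n => C (k+n) * pw ν (k+n)) := by
    refine summable_of_sum_range_le hnn1 (fun N => le_trans ?_ (hpsum N))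
    exact Finset.sum_le_sum fun n _ => by linarith [hnn2 n]
  have hs2 : Summable (fun n => (pw ν (k+n) - pw ν (k+n+1)) * FF C (k+n+1)) := by
    refine summable_of_sum_range_le hnn2 (fun N => le_trans ?_ (hpsum N))
    exact Finset.sum_le_sum fun n _ => by linarith [hnn1 n]
  refine ⟨hs1, hs2, ?_⟩
  have htele' : HasSum (fun n =>
      C (k+n) * pw ν (k+n) + (pw ν (k+n) - pw ν (k+n+1)) * FF C (k+n+1)) (G k) := by
    simpa only [hterm] using htele
  exact (hs1.hasSum.add hs2.hasSum).unique htele'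

private lemma pw_sub_lim {ν : ℝ} (hν : 0 < ν) :
    Tendsto (fun m : ℕ => (pw ν m - pw ν (m+1)) * (m:ℝ) ^ (ν + 1)) atTop (𝓝 ν) := by
  refine (rpow_tail_lim hν).congr fun m => ?_
  simp only [pw]
  push_cast
  ring_nf

private lemma keyU {C : ℕ → ℝ} (hC : ∀ l, 0 ≤ C l) (hCsum : Summable C)
    {ν ϰ : ℝ} (hν : 0 < ν) (hϰ : 0 < ϰ)
    (hF : Tendsto (fun k : ℕ => FF C k * (k : ℝ) ^ ϰ) atTop (𝓝 1)) :
    Tendsto (fun k : ℕ =>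
        (∑' n, (pw ν (k+n) - pw ν (k+n+1)) * FF C (k+n+1)) * (k:ℝ) ^ (ϰ + ν))
      atTop (𝓝 (ν / (ϰ + ν))) := by
  have hp : 0 < ϰ + ν := by linarith
  set p := ϰ + ν with hpdef
  set L := ν / p with hLdef
  set x : ℕ → ℝ := fun m => (pw ν m - pw ν (m+1)) * FF C (m+1) with hxdef
  -- F (m+1) * m ^ ϰ → 1
  have hFm : Tendsto (fun m : ℕ => FF C (m+1) * (m:ℝ) ^ ϰ) atTop (𝓝 1) := by
    have h1 : Tendsto (fun m : ℕ => FF C (m+1) * ((m:ℝ)+1) ^ ϰ) atTop (𝓝 1) := by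
      have := hF.comp (tendsto_add_atTop_nat 1)
      refine this.congr fun m => ?_
      simp only [Function.comp]
      push_cast
      ring_nf
    have hbase : Tendsto (fun m : ℕ => (m:ℝ)/((m:ℝ)+1)) atTop (𝓝 1) := by
      have h0 : Tendsto (fun m : ℕ => 1 - 1/((m:ℝ)+1)) atTop (𝓝 1) := by
        simpa using tendsto_const_nhds.sub (tendsto_one_div_add_atTop_nhds_zero_nat (𝕜 := ℝ))
      refine h0.congr fun m => ?_
      have : ((m:ℝ)+1) ≠ 0 := by positivity
      field_simp
      ring
    have h2 : Tendsto (fun m : ℕ => ((m:ℝ)/((m:ℝ)+1)) ^ ϰ) atTop (𝓝 1) := by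
      have h2' := hbase.rpow_const (p := ϰ) (Or.inl one_ne_zero)
      simpa using h2'
    have h3 := h1.mul h2
    rw [mul_one] at h3
    refine h3.congr fun m => ?_
    have hne : ((m:ℝ)+1) ≠ 0 := by positivity
    have h4 : ((m:ℝ)+1) ^ ϰ * ((m:ℝ)/((m:ℝ)+1)) ^ ϰ = (m:ℝ) ^ ϰ := by
      rw [← Real.mul_rpow (by positivity) (by positivity)]
      congr 1
      field_simp
    rw [mul_assoc, h4]
  have hx : Tendsto (fun m : ℕ => x m * (m:ℝ) ^ (p+1)) atTop (𝓝 ν) := by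
    have h5 := (pw_sub_lim hν).mul hFm
    rw [mul_one] at h5
    refine h5.congr' ?_
    filter_upwards [eventually_ge_atTop 1] with m hm
    have hm0 : (0:ℝ) < (m:ℝ) := by exact_mod_cast hm
    have h6 : (m:ℝ) ^ (ν+1) * (m:ℝ) ^ ϰ = (m:ℝ) ^ (p+1) := by
      rw [← Real.rpow_add hm0]
      congr 1
      rw [hpdef]; ring
    simp only [hxdef]
    rw [← h6]
    ring
  have he : Tendsto (fun m : ℕ => (pw p m - pw p (m+1)) * (m:ℝ) ^ (p+1)) atTop (𝓝 p) :=
    pw_sub_lim hp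
  rw [Metric.tendsto_atTop]
  intro ε hε
  have hδ : 0 < ε/2 := by linarith
  have hup : ∀ᶠ m in atTop, x m ≤ (L + ε/2) * (pw p m - pw p (m+1)) := by
    have hlt : ν < (L + ε/2) * p := by
      have hLp : L * p = ν := by rw [hLdef]; field_simp
      nlinarith [mul_pos hδ hp]
    have h7 : Tendsto (fun m : ℕ => (L + ε/2) * ((pw p m - pw p (m+1)) * (m:ℝ)^(p+1)))
        atTop (𝓝 ((L + ε/2) * p)) := he.const_mul _
    filter_upwards [hx.eventually_lt h7 hlt, eventually_ge_atTop 1] with m hmlt hm1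
    have hm0 : (0:ℝ) < (m:ℝ) ^ (p+1) := by
      have : (0:ℝ) < (m:ℝ) := by exact_mod_cast hm1
      positivity
    have := hmlt
    rw [show (L + ε/2) * ((pw p m - pw p (m+1)) * (m:ℝ)^(p+1))
        = ((L + ε/2) * (pw p m - pw p (m+1))) * (m:ℝ)^(p+1) from by ring] at this
    exact le_of_lt ((mul_lt_mul_iff_of_pos_right hm0).1 this)
  have hlo : ∀ᶠ m in atTop, (L - ε/2) * (pw p m - pw p (m+1)) ≤ x m := by
    have hlt : (L - ε/2) * p < ν := by
      have hLp : L * p = ν := by rw [hLdef]; field_simp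
      nlinarith [mul_pos hδ hp]
    have h7 : Tendsto (fun m : ℕ => (L - ε/2) * ((pw p m - pw p (m+1)) * (m:ℝ)^(p+1)))
        atTop (𝓝 ((L - ε/2) * p)) := he.const_mul _
    filter_upwards [h7.eventually_lt hx hlt, eventually_ge_atTop 1] with m hmlt hm1
    have hm0 : (0:ℝ) < (m:ℝ) ^ (p+1) := by
      have : (0:ℝ) < (m:ℝ) := by exact_mod_cast hm1
      positivity
    have := hmlt
    rw [show (L - ε/2) * ((pw p m - pw p (m+1)) * (m:ℝ)^(p+1))
        = ((L - ε/2) * (pw p m - pw p (m+1))) * (m:ℝ)^(p+1) from by ring] at this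
    exact le_of_lt ((mul_lt_mul_iff_of_pos_right hm0).1 this)
  obtain ⟨K, hK⟩ := ((hup.and hlo).and (eventually_ge_atTop 1)).exists_forall_of_atTop
  refine ⟨K, fun k hk => ?_⟩
  obtain ⟨⟨hKup, hKlo⟩, hk1⟩ := hK k hk
  have hterm : ∀ n, ((hup_n : x (k+n) ≤ (L + ε/2) * (pw p (k+n) - pw p (k+n+1))) → True) := fun n _ => trivial
  have hKup' : ∀ n : ℕ, x (k+n) ≤ (L + ε/2) * (pw p (k+n) - pw p (k+n+1)) :=
    fun n => ((hK (k+n) (le_trans hk (Nat.le_add_right k n))).1).1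
  have hKlo' : ∀ n : ℕ, (L - ε/2) * (pw p (k+n) - pw p (k+n+1)) ≤ x (k+n) :=
    fun n => ((hK (k+n) (le_trans hk (Nat.le_add_right k n))).1).2
  have htele := telescope_hasSum (pw p) k (pw_nonneg p)
    (fun n hn => pw_anti hp (le_trans hk1 hn)) (pw_lim hp)
  have hesum : Summable (fun n => pw p (k+n) - pw p (k+n+1)) := htele.summable
  have hxnn : ∀ n, 0 ≤ x (k+n) := fun n =>
    mul_nonneg (sub_nonneg.2 (pw_anti hν (le_trans hk1 (Nat.le_add_right k n))))
      (FF_nonneg hC _)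
  have hxsum : Summable (fun n => x (k+n)) :=
    Summable.of_nonneg_of_le hxnn hKup' (hesum.mul_left _)
  have hub : (∑' n, x (k+n)) ≤ (L + ε/2) * pw p k := by
    calc (∑' n, x (k+n)) ≤ ∑' n, (L + ε/2) * (pw p (k+n) - pw p (k+n+1)) :=
          Summable.tsum_le_tsum hKup' hxsum (hesum.mul_left _)
      _ = (L + ε/2) * pw p k := by rw [tsum_mul_left, htele.tsum_eq]
  have hlb : (L - ε/2) * pw p k ≤ ∑' n, x (k+n) := by
    calc (L - ε/2) * pw p k = ∑' n, (L - ε/2) * (pw p (k+n) - pw p (k+n+1)) := by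
          rw [tsum_mul_left, htele.tsum_eq]
      _ ≤ ∑' n, x (k+n) := Summable.tsum_le_tsum hKlo' (hesum.mul_left _) hxsum
  have hkp : (0:ℝ) ≤ (k:ℝ) ^ p := Real.rpow_nonneg (Nat.cast_nonneg k) p
  have hone : pw p k * (k:ℝ) ^ p = 1 := pw_mul hk1
  have hub2 : (∑' n, x (k+n)) * (k:ℝ)^p ≤ L + ε/2 := by
    have := mul_le_mul_of_nonneg_right hub hkp
    rw [mul_assoc, hone, mul_one] at this
    exact this
  have hlb2 : L - ε/2 ≤ (∑' n, x (k+n)) * (k:ℝ)^p := by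
    have := mul_le_mul_of_nonneg_right hlb hkp
    rw [mul_assoc, hone, mul_one] at this
    exact this
  have hxx : (∑' (n:ℕ), (pw ν (k+n) - pw ν (k+n+1)) * FF C (k+n+1)) = ∑' n, x (k+n) := rfl
  rw [Real.dist_eq, hxx, abs_lt]
  constructor <;> linarith

private lemma keyT {C : ℕ → ℝ} (hC : ∀ l, 0 ≤ C l) (hCsum : Summable C)
    {ν ϰ : ℝ} (hν : 0 < ν) (hϰ : 0 < ϰ)
    (hF : Tendsto (fun k : ℕ => FF C k * (k : ℝ) ^ ϰ) atTop (𝓝 1)) :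
    Tendsto (fun k : ℕ => (∑' n, C (k+n) * pw ν (k+n)) * (k:ℝ) ^ (ϰ + ν))
      atTop (𝓝 (ϰ / (ϰ + ν))) := by
  have hp : 0 < ϰ + ν := by linarith
  have hU := keyU hC hCsum hν hϰ hF
  have hlim := hF.sub hU
  have hval : (1 : ℝ) - ν / (ϰ + ν) = ϰ / (ϰ + ν) := by field_simp; ring
  rw [hval] at hlim
  refine hlim.congr' ?_
  filter_upwards [eventually_ge_atTop 1] with k hk1
  have hk0 : (0:ℝ) < (k:ℝ) := by exact_mod_cast hk1
  obtain ⟨hs1, hs2, hid⟩ := keyIdentity hC hCsum hν hk1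
  have hT : (∑' n, C (k+n) * pw ν (k+n))
      = FF C k * pw ν k - ∑' n, (pw ν (k+n) - pw ν (k+n+1)) * FF C (k+n+1) := by
    linarith [hid]
  rw [hT, sub_mul]
  congr 1
  have hsplit : (k:ℝ) ^ (ϰ + ν) = (k:ℝ) ^ ϰ * (k:ℝ) ^ ν := by
    rw [← Real.rpow_add hk0]
  rw [hsplit]
  have hone : pw ν k * (k:ℝ) ^ ν = 1 := pw_mul hk1
  rw [show FF C k * pw ν k * ((k:ℝ) ^ ϰ * (k:ℝ) ^ ν)
      = FF C k * (k:ℝ) ^ ϰ * (pw ν k * (k:ℝ) ^ ν) from by ring, hone, mul_one]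

/-- Tail sum asymptotics under power laws: if `C_l ≥ 0`, `C` is summable,
`S_k = k^{−ν}(1+o(1))` and `Σ_{l≥k} C_l = k^{−ϰ}(1+o(1))`, then with `ζ = ϰ/ν`
one has `Σ_{l≥k} C_l S_l = (ζ/(ζ+1))·k^{−ϰ−ν}(1+o(1))`. -/
theorem tail_sum_asymptotics
    (C S : ℕ → ℝ) (hC : ∀ l, 0 ≤ C l) (hCsum : Summable C)
    (ν ϰ : ℝ) (hν : 0 < ν) (hϰ : 0 < ϰ)
    (hS : Tendsto (fun k : ℕ => S k * (k : ℝ) ^ ν) atTop (𝓝 1))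
    (hF : Tendsto (fun k : ℕ => (∑' l, C (k + l)) * (k : ℝ) ^ ϰ) atTop (𝓝 1)) :
    Tendsto (fun k : ℕ => (∑' l, C (k + l) * S (k + l)) * (k : ℝ) ^ (ϰ + ν))
      atTop (𝓝 ((ϰ / ν) / (ϰ / ν + 1))) := by
  have hp : 0 < ϰ + ν := by linarith
  have hFa : Tendsto (fun k : ℕ => FF C k * (k : ℝ) ^ ϰ) atTop (𝓝 1) := hF
  have key := keyT hC hCsum hν hϰ hFa
  have hval : (ϰ / ν) / (ϰ / ν + 1) = ϰ / (ϰ + ν) := by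
    have hν' : ν ≠ 0 := ne_of_gt hν
    have hp' : ϰ + ν ≠ 0 := ne_of_gt hp
    field_simp
  rw [hval]
  -- the difference tends to zero
  have hD : Tendsto (fun k : ℕ => (∑' l, C (k + l) * S (k + l)) * (k:ℝ) ^ (ϰ + ν)
      - (∑' n, C (k+n) * pw ν (k+n)) * (k:ℝ) ^ (ϰ + ν)) atTop (𝓝 0) := by
    rw [Metric.tendsto_atTop]
    intro ε hε
    set M : ℝ := ϰ / (ϰ + ν) + 1 with hMdef
    have hM : 0 < M := by
      have h0 : 0 < ϰ / (ϰ + ν) := div_pos hϰ hp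
      rw [hMdef]
      linarith
    have hε' : 0 < ε / (2 * M) := by positivity
    set ε' : ℝ := ε / (2 * M) with hε'def
    have hkey : ∀ᶠ k : ℕ in atTop, (∑' n, C (k+n) * pw ν (k+n)) * (k:ℝ) ^ (ϰ + ν) < M :=
      key.eventually_lt tendsto_const_nhds (by rw [hMdef]; linarith)
    have hSb : ∀ᶠ l : ℕ in atTop, |S l * (l:ℝ) ^ ν - 1| ≤ ε' := by
      have := Metric.tendsto_atTop.1 hS ε' hε'
      obtain ⟨N, hN⟩ := this
      rw [eventually_atTop]
      exact ⟨N, fun l hl => le_of_lt (by simpa [Real.dist_eq] using hN l hl)⟩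
    obtain ⟨N1, hN1⟩ := eventually_atTop.1 hkey
    obtain ⟨N2, hN2⟩ := eventually_atTop.1 hSb
    refine ⟨max (max N1 N2) 1, fun k hk => ?_⟩
    have hk1 : 1 ≤ k := le_trans (le_max_right _ 1) hk
    have hkN1 : N1 ≤ k := le_trans (le_trans (le_max_left _ _) (le_max_left _ 1)) hk
    have hkN2 : N2 ≤ k := le_trans (le_trans (le_max_right _ _) (le_max_left _ 1)) hk
    obtain ⟨hs1, _, _⟩ := keyIdentity hC hCsum hν hk1
    have hTnn : 0 ≤ ∑' n, C (k+n) * pw ν (k+n) :=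
      tsum_nonneg fun n => mul_nonneg (hC _) (pw_nonneg ν _)
    have hsa : ∀ n : ℕ, |S (k+n) - pw ν (k+n)| ≤ ε' * pw ν (k+n) := by
      intro n
      have hm1 : 1 ≤ k + n := le_trans hk1 (Nat.le_add_right k n)
      have hpos : (0:ℝ) < ((k+n : ℕ):ℝ) := by exact_mod_cast hm1
      have h1 : ((k+n : ℕ):ℝ) ^ ν * pw ν (k+n) = 1 := by
        rw [pw, ← Real.rpow_add hpos]; simp
      have hkey2 : S (k+n) - pw ν (k+n)
          = (S (k+n) * ((k+n : ℕ):ℝ) ^ ν - 1) * pw ν (k+n) := by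
        rw [sub_mul, one_mul, mul_assoc, h1, mul_one]
      rw [hkey2, abs_mul, abs_of_nonneg (pw_nonneg ν _)]
      exact mul_le_mul_of_nonneg_right (hN2 (k+n) (le_trans hkN2 (Nat.le_add_right k n)))
        (pw_nonneg ν _)
    have hfS : Summable fun n => C (k+n) * S (k+n) := by
      refine Summable.of_norm_bounded (g := fun n => (1 + ε') * (C (k+n) * pw ν (k+n)))
        (hs1.mul_left _) fun n => ?_
      rw [Real.norm_eq_abs, abs_mul, abs_of_nonneg (hC _)]
      have h5 : |S (k+n)| ≤ (1 + ε') * pw ν (k+n) := by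
        have h6 : |S (k+n)| ≤ |S (k+n) - pw ν (k+n)| + |pw ν (k+n)| := by
          have := abs_add_le (S (k+n) - pw ν (k+n)) (pw ν (k+n))
          simpa using this
        rw [abs_of_nonneg (pw_nonneg ν _)] at h6
        have := hsa n
        linarith
      calc C (k+n) * |S (k+n)| ≤ C (k+n) * ((1 + ε') * pw ν (k+n)) :=
            mul_le_mul_of_nonneg_left h5 (hC _)
        _ = (1 + ε') * (C (k+n) * pw ν (k+n)) := by ring
    have hnsum : Summable fun n => ‖C (k+n) * S (k+n) - C (k+n) * pw ν (k+n)‖ := by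
      refine Summable.of_nonneg_of_le (fun n => norm_nonneg _)
        (fun n => ?_) (hs1.mul_left ε')
      rw [Real.norm_eq_abs, show C (k+n) * S (k+n) - C (k+n) * pw ν (k+n)
          = C (k+n) * (S (k+n) - pw ν (k+n)) from by ring, abs_mul,
        abs_of_nonneg (hC _)]
      calc C (k+n) * |S (k+n) - pw ν (k+n)| ≤ C (k+n) * (ε' * pw ν (k+n)) :=
            mul_le_mul_of_nonneg_left (hsa n) (hC _)
        _ = ε' * (C (k+n) * pw ν (k+n)) := by ring
    have habs : |∑' n, (C (k+n) * S (k+n) - C (k+n) * pw ν (k+n))|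
        ≤ ε' * ∑' n, C (k+n) * pw ν (k+n) := by
      have h7 := norm_tsum_le_tsum_norm hnsum
      rw [Real.norm_eq_abs] at h7
      refine le_trans h7 ?_
      have h8 : ∑' n, ‖C (k+n) * S (k+n) - C (k+n) * pw ν (k+n)‖
          ≤ ∑' n, ε' * (C (k+n) * pw ν (k+n)) := by
        refine Summable.tsum_le_tsum (fun n => ?_) hnsum (hs1.mul_left ε')
        rw [Real.norm_eq_abs, show C (k+n) * S (k+n) - C (k+n) * pw ν (k+n)
            = C (k+n) * (S (k+n) - pw ν (k+n)) from by ring, abs_mul,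
          abs_of_nonneg (hC _)]
        calc C (k+n) * |S (k+n) - pw ν (k+n)| ≤ C (k+n) * (ε' * pw ν (k+n)) :=
              mul_le_mul_of_nonneg_left (hsa n) (hC _)
          _ = ε' * (C (k+n) * pw ν (k+n)) := by ring
      rw [tsum_mul_left] at h8
      exact h8
    have hdiff : (∑' l, C (k + l) * S (k + l)) - (∑' n, C (k+n) * pw ν (k+n))
        = ∑' n, (C (k+n) * S (k+n) - C (k+n) * pw ν (k+n)) :=
      (hfS.tsum_sub hs1).symm
    have hkp : (0:ℝ) ≤ (k:ℝ) ^ (ϰ + ν) := Real.rpow_nonneg (Nat.cast_nonneg k) _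
    have hTb : (∑' n, C (k+n) * pw ν (k+n)) * (k:ℝ) ^ (ϰ + ν) ≤ M :=
      le_of_lt (hN1 k hkN1)
    rw [Real.dist_eq, sub_zero, ← sub_mul, hdiff, abs_mul, abs_of_nonneg hkp]
    calc |∑' n, (C (k+n) * S (k+n) - C (k+n) * pw ν (k+n))| * (k:ℝ) ^ (ϰ + ν)
        ≤ (ε' * ∑' n, C (k+n) * pw ν (k+n)) * (k:ℝ) ^ (ϰ + ν) :=
          mul_le_mul_of_nonneg_right habs hkp
      _ = ε' * ((∑' n, C (k+n) * pw ν (k+n)) * (k:ℝ) ^ (ϰ + ν)) := by ring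
      _ ≤ ε' * M := mul_le_mul_of_nonneg_left hTb (le_of_lt hε')
      _ = ε / 2 := by rw [hε'def]; field_simp
      _ < ε := by linarith
  have := hD.add key
  rw [zero_add] at this
  refine this.congr fun k => ?_
  ring
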